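/- Let P be an r-differential poset, n ≥ 1, and let M_n = U_{n−1}(D_nU_{n−1})^{-1}D_n : ℚP_n → ℚP_n. Then in the standard basis P_n of ℚP_n, the matrix entries m_{xy} = ⟨M_n y, x⟩ of M_n are given by m_{xy} = Σ_{k=1}^{n} (−1)^{k−1} · ⟨D^k x, D^k y⟩ / (r^k · k!) for all x, y ∈ P_n. -/

import Mathlib

open Classical in
/-- The up operator `U_n : ℚP_n → ℚP_{n+1}` of a graded poset with rank function `rank`,
sending each basis element `x ∈ P_n` to the sum of the elements covering it. -/
noncomputable def upMap {P : Type*} [PartialOrder P] (rank : P → ℕ)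
    [∀ m : ℕ, Fintype {x : P // rank x = m}] (n : ℕ) :
    ({x : P // rank x = n} → ℚ) →ₗ[ℚ] ({x : P // rank x = n + 1} → ℚ) :=
  Matrix.mulVecLin (fun (y : {x : P // rank x = n + 1}) (x : {x : P // rank x = n}) =>
    if (x : P) ⋖ (y : P) then 1 else 0)

open Classical in
/-- The down operator `D_n : ℚP_n → ℚP_{n-1}` of a graded poset with rank function `rank`,
sending each basis element `x ∈ P_n` to the sum of the elements it covers.
(For `n = 0` this is the zero map on `ℚP_0` in a graded poset, matching `D_0 = 0`.) -/
noncomputable def downMap {P : Type*} [PartialOrder P] (rank : P → ℕ)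
    [∀ m : ℕ, Fintype {x : P // rank x = m}] (n : ℕ) :
    ({x : P // rank x = n} → ℚ) →ₗ[ℚ] ({x : P // rank x = n - 1} → ℚ) :=
  Matrix.mulVecLin (fun (z : {x : P // rank x = n - 1}) (x : {x : P // rank x = n}) =>
    if (z : P) ⋖ (x : P) then 1 else 0)

/-- `P` (a partial order with rank function `rank`, all rank sets finite) is an
`r`-differential poset: `r > 0`, there is a least element `0̂` of rank `0`, the poset is
graded (covers raise rank by exactly one, the rank function is strictly monotone, and every
element of nonzero rank covers something), and `D_{n+1} U_n - U_{n-1} D_n = r·I` on `ℚP_n`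
for all `n ≥ 0` (for `n = 0` the relation reads `D_1 U_0 = r·I`, since `D_0 = 0`). -/
structure IsDifferentialPoset {P : Type*} [PartialOrder P] (rank : P → ℕ)
    [∀ m : ℕ, Fintype {x : P // rank x = m}] (r : ℕ) : Prop where
  r_pos : 0 < r
  exists_bot : ∃ b : P, rank b = 0 ∧ ∀ x : P, b ≤ x
  rank_covBy : ∀ x y : P, x ⋖ y → rank y = rank x + 1
  rank_strictMono : ∀ x y : P, x < y → rank x < rank y
  exists_covBy_of_rank_ne_zero : ∀ x : P, rank x ≠ 0 → ∃ y : P, y ⋖ x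
  diff_zero : downMap rank 1 ∘ₗ upMap rank 0 = (r : ℚ) • LinearMap.id
  diff : ∀ n : ℕ,
    LinearMap.comp (M₃ := {x : P // rank x = n + 1} → ℚ)
        (downMap rank (n + 2)) (upMap rank (n + 1))
      - upMap rank n ∘ₗ downMap rank (n + 1) = (r : ℚ) • LinearMap.id

/-- The inner product on `ℚP_n` (realized as `P_n → ℚ`) making the elements of `P_n`
an orthonormal basis. -/
noncomputable def innerQ {α : Type*} [Fintype α] (f g : α → ℚ) : ℚ := ∑ a, f a * g a

/-- The `k`-fold composite of down operators `D^k : ℚP_n → ℚP_{n-k}`. -/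
noncomputable def downIter {P : Type*} [PartialOrder P] (rank : P → ℕ)
    [∀ m : ℕ, Fintype {x : P // rank x = m}] (n : ℕ) :
    (k : ℕ) → ({x : P // rank x = n} → ℚ) →ₗ[ℚ] ({x : P // rank x = n - k} → ℚ)
  | 0 => LinearMap.id
  | k + 1 => downMap rank (n - k) ∘ₗ downIter rank n k

section Aux

set_option linter.unusedSectionVars false
variable {P : Type*} [PartialOrder P] [DecidableEq P] (rank : P → ℕ)
  [∀ m : ℕ, Fintype {x : P // rank x = m}]

open Classical in
noncomputable def dvec (x : P) : P →₀ ℚ :=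
  ∑ z : {z : P // rank z = rank x - 1},
    if (z : P) ⋖ x then Finsupp.single (z : P) (1 : ℚ) else 0

open Classical in
noncomputable def uvec (x : P) : P →₀ ℚ :=
  ∑ y : {y : P // rank y = rank x + 1},
    if x ⋖ (y : P) then Finsupp.single (y : P) (1 : ℚ) else 0

noncomputable def Dg : (P →₀ ℚ) →ₗ[ℚ] (P →₀ ℚ) :=
  Finsupp.lsum ℚ fun x => LinearMap.toSpanSingleton ℚ _ (dvec rank x)

noncomputable def Ug : (P →₀ ℚ) →ₗ[ℚ] (P →₀ ℚ) :=
  Finsupp.lsum ℚ fun x => LinearMap.toSpanSingleton ℚ _ (uvec rank x)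

lemma Dg_single (x : P) (c : ℚ) :
    Dg rank (Finsupp.single x c) = c • dvec rank x := by
  simp [Dg, LinearMap.toSpanSingleton_apply]

lemma Ug_single (x : P) (c : ℚ) :
    Ug rank (Finsupp.single x c) = c • uvec rank x := by
  simp [Ug, LinearMap.toSpanSingleton_apply]

noncomputable def emb (m : ℕ) : ({x : P // rank x = m} → ℚ) →ₗ[ℚ] (P →₀ ℚ) where
  toFun f := ∑ a : {x : P // rank x = m}, Finsupp.single (a : P) (f a)
  map_add' f g := by simp [Finsupp.single_add, Finset.sum_add_distrib]
  map_smul' c f := by simp [Finsupp.smul_single, Finset.smul_sum]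

lemma emb_apply (m : ℕ) (f : {x : P // rank x = m} → ℚ) :
    emb rank m f = ∑ a : {x : P // rank x = m}, Finsupp.single (a : P) (f a) := rfl

lemma emb_coe (m : ℕ) (f : {x : P // rank x = m} → ℚ) (a : {x : P // rank x = m}) :
    emb rank m f (a : P) = f a := by
  classical
  simp only [emb_apply, Finsupp.finset_sum_apply, Finsupp.single_apply]
  rw [Finset.sum_eq_single a] <;> simp +contextual [Subtype.ext_iff, eq_comm]

lemma emb_single (m : ℕ) (a : {x : P // rank x = m}) :
    emb rank m (Pi.single a 1) = Finsupp.single (a : P) (1 : ℚ) := by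
  classical
  rw [emb_apply, Finset.sum_eq_single a] <;>
    simp +contextual [Pi.single_apply]


open Classical in
lemma dvec_eq (x : P) (m : ℕ) (hx : rank x = m) :
    dvec rank x = ∑ z : {z : P // rank z = m - 1},
      if (z : P) ⋖ x then Finsupp.single (z : P) (1 : ℚ) else 0 := by
  subst hx; rfl

open Classical in
lemma uvec_eq (x : P) (m : ℕ) (hx : rank x = m) :
    uvec rank x = ∑ y : {y : P // rank y = m + 1},
      if x ⋖ (y : P) then Finsupp.single (y : P) (1 : ℚ) else 0 := by
  subst hx; rfl

open Classical in
lemma downMap_apply (m : ℕ) (f : {x : P // rank x = m} → ℚ) (z : {x : P // rank x = m - 1}) :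
    downMap rank m f z = ∑ a : {x : P // rank x = m}, if (z : P) ⋖ (a : P) then f a else 0 := by
  simp only [downMap]; erw [Matrix.mulVecLin_apply]
  simp [Matrix.mulVec, dotProduct]

open Classical in
lemma upMap_apply (m : ℕ) (f : {x : P // rank x = m} → ℚ) (z : {x : P // rank x = m + 1}) :
    upMap rank m f z = ∑ a : {x : P // rank x = m}, if (a : P) ⋖ (z : P) then f a else 0 := by
  simp only [upMap]; erw [Matrix.mulVecLin_apply]
  simp [Matrix.mulVec, dotProduct]

lemma Dg_emb (m : ℕ) (f : {x : P // rank x = m} → ℚ) :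
    Dg rank (emb rank m f) = emb rank (m - 1) (downMap rank m f) := by
  classical
  rw [emb_apply, map_sum]
  have h1 : ∀ a : {x : P // rank x = m},
      Dg rank (Finsupp.single (a : P) (f a))
        = ∑ z : {z : P // rank z = m - 1},
            if (z : P) ⋖ (a : P) then Finsupp.single (z : P) (f a) else 0 := by
    intro a
    rw [Dg_single, dvec_eq rank (a : P) m a.2, Finset.smul_sum]
    refine Finset.sum_congr rfl fun z _ => ?_
    split_ifs <;> simp [Finsupp.smul_single]
  rw [Finset.sum_congr rfl fun a _ => h1 a, Finset.sum_comm, emb_apply]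
  refine Finset.sum_congr rfl fun z _ => ?_
  rw [downMap_apply, Finsupp.single_finset_sum]
  refine Finset.sum_congr rfl fun a _ => ?_
  split_ifs <;> simp

lemma Ug_emb (m : ℕ) (f : {x : P // rank x = m} → ℚ) :
    Ug rank (emb rank m f) = emb rank (m + 1) (upMap rank m f) := by
  classical
  rw [emb_apply, map_sum]
  have h1 : ∀ a : {x : P // rank x = m},
      Ug rank (Finsupp.single (a : P) (f a))
        = ∑ z : {z : P // rank z = m + 1},
            if (a : P) ⋖ (z : P) then Finsupp.single (z : P) (f a) else 0 := by
    intro a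
    rw [Ug_single, uvec_eq rank (a : P) m a.2, Finset.smul_sum]
    refine Finset.sum_congr rfl fun z _ => ?_
    split_ifs <;> simp [Finsupp.smul_single]
  rw [Finset.sum_congr rfl fun a _ => h1 a, Finset.sum_comm, emb_apply]
  refine Finset.sum_congr rfl fun z _ => ?_
  rw [upMap_apply, Finsupp.single_finset_sum]
  refine Finset.sum_congr rfl fun a _ => ?_
  split_ifs <;> simp


variable {r : ℕ} {rank}

lemma downMap_zero (hP : IsDifferentialPoset rank r) (m : ℕ) (hm : m = 0) :
    downMap rank m = 0 := by
  subst hm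
  have : ∀ (z : {x : P // rank x = (0:ℕ) - 1}) (a : {x : P // rank x = 0}),
      ¬ ((z : P) ⋖ (a : P)) := by
    intro z a hc
    have := hP.rank_strictMono _ _ hc.lt
    omega
  apply LinearMap.ext; intro f; funext z
  rw [downMap_apply]
  simp [this]

lemma comm_single (hP : IsDifferentialPoset rank r) (x : P) :
    Dg rank (Ug rank (Finsupp.single x (1:ℚ)))
      = Ug rank (Dg rank (Finsupp.single x (1:ℚ))) + (r : ℚ) • Finsupp.single x 1 := by
  rcases hm : rank x with _ | t
  · have hx : Finsupp.single x (1:ℚ) = emb rank 0 (Pi.single ⟨x, hm⟩ 1) :=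
      (emb_single rank 0 ⟨x, hm⟩).symm
    rw [hx, Ug_emb, Dg_emb, Dg_emb, downMap_zero hP 0 rfl]
    have h0 := hP.diff_zero
    have := DFunLike.congr_fun h0 (Pi.single (⟨x, hm⟩ : {z : P // rank z = 0}) (1:ℚ))
    simp only [LinearMap.comp_apply, LinearMap.smul_apply, LinearMap.id_apply] at this
    rw [this]
    simp
  · have hx : Finsupp.single x (1:ℚ) = emb rank (t+1) (Pi.single ⟨x, hm⟩ 1) :=
      (emb_single rank (t+1) ⟨x, hm⟩).symm
    rw [hx, Ug_emb, Dg_emb, Dg_emb, Ug_emb]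
    have h0 := hP.diff t
    have := DFunLike.congr_fun h0 (Pi.single (⟨x, hm⟩ : {z : P // rank z = t+1}) (1:ℚ))
    simp only [LinearMap.sub_apply, LinearMap.comp_apply, LinearMap.smul_apply,
      LinearMap.id_apply] at this
    have h2 : downMap rank (t+2) (upMap rank (t+1) (Pi.single ⟨x, hm⟩ 1))
        = upMap rank t (downMap rank (t+1) (Pi.single ⟨x, hm⟩ 1))
          + (r:ℚ) • (Pi.single ⟨x, hm⟩ 1 : {z : P // rank z = t+1} → ℚ) :=
      eq_add_of_sub_eq' (by rw [← this])
    rw [h2, map_add, map_smul]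
    rfl

lemma comm1 (hP : IsDifferentialPoset rank r) :
    Dg rank ∘ₗ Ug rank = Ug rank ∘ₗ Dg rank + (r:ℚ) • LinearMap.id := by
  apply Finsupp.lhom_ext; intro a b
  have hb : (Finsupp.single a b : P →₀ ℚ) = b • Finsupp.single a 1 := by
    simp
  simp only [LinearMap.comp_apply, LinearMap.add_apply, LinearMap.smul_apply,
    LinearMap.id_apply, hb, map_smul]
  rw [comm_single hP]


lemma comm1' (hP : IsDifferentialPoset rank r) :
    Dg rank * Ug rank = Ug rank * Dg rank + (r:ℚ) • (1 : Module.End ℚ (P →₀ ℚ)) :=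
  comm1 hP

lemma commk (hP : IsDifferentialPoset rank r) (k : ℕ) :
    (Dg rank)^(k+1) * Ug rank
      = Ug rank * (Dg rank)^(k+1) + ((r:ℚ)*(k+1)) • (Dg rank)^k := by
  induction k with
  | zero =>
    simpa [pow_one, pow_zero] using comm1' hP
  | succ k ih =>
    have h1 : (Dg rank)^(k+2) * Ug rank
        = (Dg rank)^(k+1) * (Dg rank * Ug rank) := by
      rw [pow_succ, mul_assoc]
    rw [h1, comm1' hP, mul_add, ← mul_assoc, ih, mul_smul_comm, mul_one]
    rw [add_mul, smul_mul_assoc, mul_assoc, ← pow_succ, ← pow_succ]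
    rw [add_assoc, ← add_smul]
    congr 2
    push_cast
    ring

lemma Dk_emb (m k : ℕ) (f : {x : P // rank x = m} → ℚ) :
    ((Dg rank)^k) (emb rank m f) = emb rank (m - k) (downIter rank m k f) := by
  induction k with
  | zero => simp [downIter, pow_zero]
  | succ k ih =>
    rw [pow_succ', Module.End.mul_apply, ih, Dg_emb]
    rfl

lemma Dg_pow_emb_zero (hP : IsDifferentialPoset rank r) (m : ℕ)
    (w : {x : P // rank x = m} → ℚ) :
    ((Dg rank)^(m+1)) (emb rank m w) = 0 := by
  rw [Dk_emb]
  have h1 : downIter rank m (m+1) w = downMap rank (m - m) (downIter rank m m w) := rfl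
  rw [h1, downMap_zero hP (m - m) (Nat.sub_self m)]
  simp

noncomputable def fip (p q : P →₀ ℚ) : ℚ := p.sum fun a c => c * q a

lemma fip_def (p q : P →₀ ℚ) : fip p q = ∑ a ∈ p.support, p a * q a := rfl

lemma fip_single (a : P) (c : ℚ) (q : P →₀ ℚ) :
    fip (Finsupp.single a c) q = c * q a :=
  Finsupp.sum_single_index (by simp)

lemma fip_zero_left (q : P →₀ ℚ) : fip 0 q = 0 := by simp [fip]

lemma fip_add_left (p p' q : P →₀ ℚ) : fip (p + p') q = fip p q + fip p' q :=
  Finsupp.sum_add_index' (fun a => by simp) (fun a b1 b2 => add_mul _ _ _)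

lemma fip_smul_left (c : ℚ) (p q : P →₀ ℚ) : fip (c • p) q = c * fip p q := by
  rw [fip, Finsupp.sum_smul_index (fun i => by simp), fip, Finsupp.mul_sum]
  simp [mul_assoc]

lemma fip_sum_left {ι : Type*} (s : Finset ι) (g : ι → (P →₀ ℚ)) (q : P →₀ ℚ) :
    fip (∑ i ∈ s, g i) q = ∑ i ∈ s, fip (g i) q := by
  classical
  induction s using Finset.induction with
  | empty => simp [fip_zero_left]
  | insert _ _ h ih => simp [Finset.sum_insert h, fip_add_left, ih]

lemma fip_comm (p q : P →₀ ℚ) : fip p q = fip q p := by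
  have h1 : fip p q = ∑ a ∈ p.support ∪ q.support, p a * q a :=
    Finset.sum_subset Finset.subset_union_left
      (fun a _ ha => by simp [Finsupp.notMem_support_iff.mp ha])
  have h2 : fip q p = ∑ a ∈ p.support ∪ q.support, q a * p a :=
    Finset.sum_subset Finset.subset_union_right
      (fun a _ ha => by simp [Finsupp.notMem_support_iff.mp ha])
  rw [h1, h2]
  exact Finset.sum_congr rfl fun a _ => mul_comm _ _

lemma fip_zero_right (p : P →₀ ℚ) : fip p 0 = 0 := by rw [fip_comm, fip_zero_left]

lemma fip_add_right (p q q' : P →₀ ℚ) : fip p (q + q') = fip p q + fip p q' := by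
  rw [fip_comm, fip_add_left, fip_comm q p, fip_comm q' p]


open Classical in
lemma dvec_apply (hP : IsDifferentialPoset rank r) (x a : P) :
    dvec rank x a = if a ⋖ x then 1 else 0 := by
  classical
  rw [dvec_eq rank x (rank x) rfl, Finsupp.finset_sum_apply]
  by_cases hc : a ⋖ x
  · have hr : rank a = rank x - 1 := by have := hP.rank_covBy _ _ hc; omega
    rw [Finset.sum_eq_single (⟨a, hr⟩ : {z : P // rank z = rank x - 1})]
    · simp [hc]
    · intro b _ hb
      split_ifs with h1
      · rw [Finsupp.single_apply, if_neg]
        intro he; exact hb (Subtype.ext he)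
      · rfl
    · intro h; exact absurd (Finset.mem_univ _) h
  · rw [Finset.sum_eq_zero, if_neg hc]
    intro b _
    split_ifs with h1
    · rw [Finsupp.single_apply, if_neg]
      intro he; rw [he] at h1; exact hc h1
    · rfl

open Classical in
lemma uvec_apply (hP : IsDifferentialPoset rank r) (x a : P) :
    uvec rank x a = if x ⋖ a then 1 else 0 := by
  classical
  rw [uvec_eq rank x (rank x) rfl, Finsupp.finset_sum_apply]
  by_cases hc : x ⋖ a
  · have hr : rank a = rank x + 1 := hP.rank_covBy _ _ hc
    rw [Finset.sum_eq_single (⟨a, hr⟩ : {z : P // rank z = rank x + 1})]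
    · simp [hc]
    · intro b _ hb
      split_ifs with h1
      · rw [Finsupp.single_apply, if_neg]
        intro he; exact hb (Subtype.ext he)
      · rfl
    · intro h; exact absurd (Finset.mem_univ _) h
  · rw [Finset.sum_eq_zero, if_neg hc]
    intro b _
    split_ifs with h1
    · rw [Finsupp.single_apply, if_neg]
      intro he; rw [he] at h1; exact hc h1
    · rfl

lemma Dg_apply (q : P →₀ ℚ) : Dg rank q = q.sum fun x c => c • dvec rank x := by
  simp [Dg, Finsupp.lsum_apply, LinearMap.toSpanSingleton_apply, Finsupp.sum]

lemma fip_uvec (hP : IsDifferentialPoset rank r) (a : P) (q : P →₀ ℚ) :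
    fip (uvec rank a) q = Dg rank q a := by
  classical
  rw [fip_comm, Dg_apply, Finsupp.sum_apply, fip]
  refine Finset.sum_congr rfl fun x _ => ?_
  simp only [Finsupp.smul_apply, smul_eq_mul, dvec_apply hP, uvec_apply hP]

lemma fip_Ug (hP : IsDifferentialPoset rank r) (p q : P →₀ ℚ) :
    fip (Ug rank p) q = fip p (Dg rank q) := by
  induction p using Finsupp.induction_linear with
  | zero => simp [fip_zero_left]
  | add f g hf hg => simp [map_add, fip_add_left, hf, hg]
  | single a b => rw [Ug_single, fip_smul_left, fip_single, fip_uvec hP]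

lemma fip_Ug_pow (hP : IsDifferentialPoset rank r) (k : ℕ) (p q : P →₀ ℚ) :
    fip p (((Ug rank)^k) q) = fip (((Dg rank)^k) p) q := by
  induction k generalizing p q with
  | zero => simp [pow_zero]
  | succ k ih =>
    rw [pow_succ', Module.End.mul_apply, fip_comm, fip_Ug hP, fip_comm, ih,
      pow_succ, Module.End.mul_apply]

lemma fip_emb (m : ℕ) (f g : {x : P // rank x = m} → ℚ) :
    fip (emb rank m f) (emb rank m g) = innerQ f g := by
  rw [emb_apply, fip_sum_left, innerQ]
  exact Finset.sum_congr rfl fun a _ => by rw [fip_single, emb_coe]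

end Aux

/-- Gaetz–Venkataramana, Proposition 2.3(b). Let `P` be an
`r`-differential poset, `n ≥ 1`, and `M_n = U_{n-1} (D_n U_{n-1})⁻¹ D_n : ℚP_n → ℚP_n`.
In the standard basis `P_n`, the matrix entries `m_{xy} = ⟨M_n y, x⟩` are
`m_{xy} = Σ_{k=1}^{n} (-1)^{k-1} ⟨D^k x, D^k y⟩ / (r^k · k!)`.
(Stated with `n` replaced by `n + 1`; the inverse of `D_{n+1} U_n` is presented as a
two-sided inverse `R`, and `⟨M y, x⟩` is the coordinate of `M(𝟙_y)` at `x`.) -/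
theorem projection_matrix_entries {P : Type*} [PartialOrder P] [DecidableEq P]
    (rank : P → ℕ) [∀ m : ℕ, Fintype {x : P // rank x = m}] (r : ℕ)
    (hP : IsDifferentialPoset rank r) (n : ℕ)
    (R : ({x : P // rank x = n} → ℚ) →ₗ[ℚ] ({x : P // rank x = n} → ℚ))
    (hR₁ : R ∘ₗ LinearMap.comp (M₃ := {x : P // rank x = n} → ℚ)
      (downMap rank (n + 1)) (upMap rank n) = LinearMap.id)
    (hR₂ : LinearMap.comp (M₃ := {x : P // rank x = n} → ℚ)
      (downMap rank (n + 1)) (upMap rank n) ∘ₗ R = LinearMap.id)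
    (x y : {v : P // rank v = n + 1}) :
    (upMap rank n ∘ₗ R ∘ₗ downMap rank (n + 1)) (Pi.single y 1) x
      = ∑ k ∈ Finset.Icc 1 (n + 1), (-1 : ℚ) ^ (k - 1) *
          innerQ (downIter rank (n + 1) k (Pi.single x 1))
            (downIter rank (n + 1) k (Pi.single y 1)) /
          ((r : ℚ) ^ k * (k.factorial : ℚ)) := by
  classical
  have hr0 : (r : ℚ) ≠ 0 := by
    have := hP.r_pos; positivity
  set w : {z : P // rank z = n} → ℚ := R (downMap rank (n+1) (Pi.single y 1)) with hw
  have hDU : downMap rank (n+1) (upMap rank n w) = downMap rank (n+1) (Pi.single y 1) := by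
    have h := DFunLike.congr_fun hR₂ (downMap rank (n+1) (Pi.single y 1))
    simpa [LinearMap.comp_apply] using h
  set W : P →₀ ℚ := emb rank n w with hWdef
  set Y : P →₀ ℚ := Finsupp.single (y : P) 1 with hYdef
  set X : P →₀ ℚ := Finsupp.single (x : P) 1 with hXdef
  have hY : Y = emb rank (n+1) (Pi.single y 1) := (emb_single rank (n+1) y).symm
  have hX : X = emb rank (n+1) (Pi.single x 1) := (emb_single rank (n+1) x).symm
  have hz : Dg rank (Y - Ug rank W) = 0 := by
    rw [map_sub, hY, Dg_emb, hWdef, Ug_emb, Dg_emb, hDU, sub_self]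
  have key : ∀ j : ℕ, ((Dg rank)^(j+1)) Y = ((Dg rank)^(j+1)) (Ug rank W) := by
    intro j
    have h1 : ((Dg rank)^(j+1)) (Y - Ug rank W) = 0 := by
      rw [pow_succ, Module.End.mul_apply, hz, map_zero]
    rw [map_sub] at h1
    exact sub_eq_zero.mp h1
  have hDW : ((Dg rank)^(n+1)) W = 0 := Dg_pow_emb_zero hP n w
  set a : ℕ → (P →₀ ℚ) := fun j =>
    ((-1:ℚ)^j / ((r:ℚ)^j * (j.factorial:ℚ))) • ((Ug rank)^(j+1)) (((Dg rank)^j) W) with hadef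
  have ha0 : a 0 = Ug rank W := by simp [hadef]
  have hatop : a (n+1) = 0 := by simp [hadef, hDW]
  have hterm : ∀ j : ℕ,
      ((-1:ℚ)^j / ((r:ℚ)^(j+1) * (((j+1).factorial : ℕ):ℚ))) •
          ((Ug rank)^(j+1)) (((Dg rank)^(j+1)) (Ug rank W)) = a j - a (j+1) := by
    intro j
    have hc := DFunLike.congr_fun (commk hP j) W
    simp only [Module.End.mul_apply, LinearMap.add_apply, LinearMap.smul_apply] at hc
    rw [hc, map_add, map_smul, smul_add]
    have hUU : ((Ug rank)^(j+1)) (Ug rank (((Dg rank)^(j+1)) W))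
        = ((Ug rank)^(j+2)) (((Dg rank)^(j+1)) W) := by
      simp [pow_succ, Module.End.mul_apply]
    rw [hUU, hadef]
    simp only [smul_smul]
    rw [sub_eq_add_neg, ← neg_smul, add_comm]
    congr 1
    · congr 1
      have hf : (((j+1).factorial : ℕ):ℚ) = ((j+1):ℚ) * (j.factorial:ℚ) := by
        rw [Nat.factorial_succ]; push_cast; ring
      have hfj : (j.factorial:ℚ) ≠ 0 := by positivity
      field_simp [hf]
      rw [hf]
      ring
    · congr 1
      have hf : (((j+1).factorial : ℕ):ℚ) = ((j+1):ℚ) * (j.factorial:ℚ) := by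
        rw [Nat.factorial_succ]; push_cast; ring
      have hfj : (j.factorial:ℚ) ≠ 0 := by positivity
      rw [pow_succ]
      field_simp [hf]
      ring
  have main : emb rank (n+1) (upMap rank n w)
      = ∑ k ∈ Finset.Icc 1 (n+1),
          ((-1:ℚ)^(k-1) / ((r:ℚ)^k * (k.factorial:ℚ))) • ((Ug rank)^k) (((Dg rank)^k) Y) := by
    rw [← Ug_emb, ← hWdef]
    rw [← Finset.Ico_add_one_right_eq_Icc, Finset.sum_Ico_eq_sum_range]
    have hn : n + 1 + 1 - 1 = n + 1 := by omega
    rw [hn]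
    have hstep : ∀ i ∈ Finset.range (n+1),
        ((-1:ℚ)^(1+i-1) / ((r:ℚ)^(1+i) * (((1+i).factorial:ℕ):ℚ))) •
            ((Ug rank)^(1+i)) (((Dg rank)^(1+i)) Y) = a i - a (i+1) := by
      intro i _
      have h1 : 1 + i = i + 1 := by omega
      rw [h1, key i]
      have h2 : i + 1 - 1 = i := by omega
      rw [h2]
      exact hterm i
    rw [Finset.sum_congr rfl hstep, Finset.sum_range_sub' a, ha0, hatop, sub_zero]
  have lhs_eq : (upMap rank n ∘ₗ R ∘ₗ downMap rank (n + 1)) (Pi.single y 1) x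
      = upMap rank n w x := rfl
  rw [lhs_eq, ← emb_coe rank (n+1) (upMap rank n w) x, main]
  rw [Finsupp.finset_sum_apply]
  refine Finset.sum_congr rfl fun k hk => ?_
  rw [Finsupp.smul_apply]
  have hfip : ((Ug rank)^k) (((Dg rank)^k) Y) (x : P)
      = fip X (((Ug rank)^k) (((Dg rank)^k) Y)) := by
    rw [hXdef, fip_single, one_mul]
  rw [hfip, fip_Ug_pow hP, hX, hY, Dk_emb, Dk_emb, fip_emb]
  rw [smul_eq_mul]
  ring
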